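/- Let G be a finite simple undirected graph, let v be a vertex of G, and let H_v be the auxiliary graph of v. Suppose that H_v is an s-skein for some s ≥ 1. Then there exists a solution S (a minimum-size modulator of G) with v ∉ S. -/

import Mathlib

variable {V : Type*}

/-- The graph obtained from `G` by deleting the vertex set `S`
(deleted vertices become isolated, which does not affect cluster-ness of the rest). -/
def SimpleGraph.deleteSet (G : SimpleGraph V) (S : Set V) : SimpleGraph V where
  Adj a b := G.Adj a b ∧ a ∉ S ∧ b ∉ S
  symm := by
    constructor
    intro a b h
    exact ⟨h.1.symm, h.2.2, h.2.1⟩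
  loopless := by
    constructor
    intro a h
    exact (G.ne_of_adj h.1) rfl

/-- `(u, v, w)` is a `P₃` in `G`: an induced path on the three distinct vertices
`u`, `v`, `w` with edges `uv` and `vw` and non-edge `uw`. -/
def IsP3 (G : SimpleGraph V) (u v w : V) : Prop :=
  G.Adj u v ∧ G.Adj v w ∧ ¬ G.Adj u w ∧ u ≠ w

/-- A cluster graph is a graph containing no `P₃`. -/
def IsClusterGraph (G : SimpleGraph V) : Prop :=
  ∀ u v w : V, ¬ IsP3 G u v w

/-- `S` is a modulator of `G`: deleting `S` from `G` yields a cluster graph. -/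
def IsModulator (G : SimpleGraph V) (S : Set V) : Prop :=
  IsClusterGraph (G.deleteSet S)

/-- A solution is a modulator of minimum cardinality. -/
def IsSolution (G : SimpleGraph V) (S : Set V) : Prop :=
  IsModulator G S ∧ ∀ T : Set V, IsModulator G T → S.ncard ≤ T.ncard

/-- `N1 G v` is the neighbourhood of `v` in `G`. -/
def N1 (G : SimpleGraph V) (v : V) : Set V := G.neighborSet v

/-- `N2 G v = N_G(N_G[v])` is the set of vertices at distance exactly `2` from `v`. -/
def N2 (G : SimpleGraph V) (v : V) : Set V :=
  {w | w ≠ v ∧ ¬ G.Adj v w ∧ ∃ u, G.Adj v u ∧ G.Adj u w}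

/-- Adjacency in the auxiliary graph `H_v`: non-edges of `G` inside `N1`,
and edges of `G` between `N1` and `N2`. -/
def HvAdj (G : SimpleGraph V) (v a b : V) : Prop :=
  (a ∈ N1 G v ∧ b ∈ N1 G v ∧ a ≠ b ∧ ¬ G.Adj a b) ∨
  (a ∈ N1 G v ∧ b ∈ N2 G v ∧ G.Adj a b) ∨
  (b ∈ N1 G v ∧ a ∈ N2 G v ∧ G.Adj a b)

/-- `X` is a vertex cover of the auxiliary graph `H_v`: a subset of
`V(H_v) = N1 ∪ N2` meeting every edge of `H_v`. -/
def IsVCHv (G : SimpleGraph V) (v : V) (X : Set V) : Prop :=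
  X ⊆ N1 G v ∪ N2 G v ∧ ∀ a b : V, HvAdj G v a b → a ∈ X ∨ b ∈ X

/-- `X` is a vertex cover of the graph `H`. -/
def IsVC (H : SimpleGraph V) (X : Set V) : Prop :=
  ∀ a b : V, H.Adj a b → a ∈ X ∨ b ∈ X

/-- The connected component of `v` in `G` is a clique. -/
def ComponentIsClique (G : SimpleGraph V) (v : V) : Prop :=
  ∀ u w : V, G.Reachable v u → G.Reachable v w → u ≠ w → G.Adj u w

/-- The auxiliary graph `H_v` is an `s`-skein with seagulls `(x i, y i, z i)`:
it is the disjoint union of `s` seagulls (paths on three vertices with middle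
vertex `y i ∈ N1` and endpoints `x i, z i ∈ N2`) and isolated vertices. -/
def IsSkein (G : SimpleGraph V) (v : V) (s : ℕ) (x y z : Fin s → V) : Prop :=
  (∀ i, x i ∈ N2 G v ∧ y i ∈ N1 G v ∧ z i ∈ N2 G v) ∧
  (∀ i, x i ≠ z i) ∧
  (∀ i j, i ≠ j → ({x i, y i, z i} ∩ {x j, y j, z j} : Set V) = ∅) ∧
  (∀ i, HvAdj G v (x i) (y i) ∧ HvAdj G v (y i) (z i) ∧ ¬ HvAdj G v (x i) (z i)) ∧
  (∀ a b : V, HvAdj G v a b →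
    ∃ i, (a = x i ∧ b = y i) ∨ (a = y i ∧ b = x i) ∨
         (a = y i ∧ b = z i) ∨ (a = z i ∧ b = y i))

lemma exists_solution [Fintype V] (G : SimpleGraph V) : ∃ S : Set V, IsSolution G S := by
  classical
  have hne : ∃ n : ℕ, ∃ S : Set V, IsModulator G S ∧ S.ncard = n := by
    refine ⟨(Set.univ : Set V).ncard, Set.univ, ?_, rfl⟩
    intro a b c hP3
    exact hP3.1.2.1 (Set.mem_univ a)
  classical
  obtain ⟨S, hS, hcard⟩ := Nat.find_spec hne
  refine ⟨S, hS, fun T hT => ?_⟩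
  rw [hcard]
  exact Nat.find_min' hne ⟨T, hT, rfl⟩

/-- If `H_v` is an `s`-skein for some `s ≥ 1`, then there is a
solution not containing `v`. -/
theorem stmt_9 [Fintype V] (G : SimpleGraph V) (v : V) (s : ℕ) (hs : 1 ≤ s)
    (x y z : Fin s → V) (hskein : IsSkein G v s x y z) :
    ∃ S : Set V, IsSolution G S ∧ v ∉ S := by
  classical
  obtain ⟨hmem, hxz, hdisj, hedge, hcomp⟩ := hskein
  -- N1 and N2 are disjoint
  have hN12 : ∀ w : V, w ∈ N1 G v → w ∈ N2 G v → False := by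
    intro w h1 h2
    exact h2.2.1 h1
  -- basic adjacency facts
  have hadjvy : ∀ i, G.Adj v (y i) := fun i => (hmem i).2.1
  have hadjxy : ∀ i, G.Adj (x i) (y i) := by
    intro i
    rcases (hedge i).1 with h | h | h
    · exact absurd h.1 (fun hh => hN12 _ hh (hmem i).1)
    · exact h.2.2
    · exact h.2.2
  have hadjyz : ∀ i, G.Adj (y i) (z i) := by
    intro i
    rcases (hedge i).2.1 with h | h | h
    · exact absurd h.2.1 (fun hh => hN12 _ hh (hmem i).2.2)
    · exact h.2.2
    · exact h.2.2
  -- disjointness of triples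
  have htr : ∀ i j, i ≠ j → ∀ w : V, w ∈ ({x i, y i, z i} : Set V) →
      w ∈ ({x j, y j, z j} : Set V) → False := by
    intro i j hij w h1 h2
    have := hdisj i j hij
    rw [Set.eq_empty_iff_forall_notMem] at this
    exact this w ⟨h1, h2⟩
  have hyy : ∀ i j, i ≠ j → y i ≠ y j := by
    intro i j hij h
    exact htr i j hij (y i) (by simp) (by simp [h])
  -- N1 is a clique in G
  have hclique : ∀ a b : V, a ∈ N1 G v → b ∈ N1 G v → a ≠ b → G.Adj a b := by
    intro a b ha hb hab
    by_contra hno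
    obtain ⟨i, h⟩ := hcomp a b (Or.inl ⟨ha, hb, hab, hno⟩)
    rcases h with ⟨h1, h2⟩ | ⟨h1, h2⟩ | ⟨h1, h2⟩ | ⟨h1, h2⟩
    · exact hN12 a (h1 ▸ ha) (h1 ▸ (hmem i).1)
    · exact hN12 b (h2 ▸ hb) (h2 ▸ (hmem i).1)
    · exact hN12 b (h2 ▸ hb) (h2 ▸ (hmem i).2.2)
    · exact hN12 a (h1 ▸ ha) (h1 ▸ (hmem i).2.2)
  -- edges between N1 and N2 are exactly the seagull edges
  have hN1N2 : ∀ a b : V, a ∈ N1 G v → b ∈ N2 G v → G.Adj a b →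
      ∃ i, a = y i ∧ (b = x i ∨ b = z i) := by
    intro a b ha hb hadj
    obtain ⟨i, h⟩ := hcomp a b (Or.inr (Or.inl ⟨ha, hb, hadj⟩))
    rcases h with ⟨h1, h2⟩ | ⟨h1, h2⟩ | ⟨h1, h2⟩ | ⟨h1, h2⟩
    · exact absurd (h1 ▸ (hmem i).1) (fun hh => hN12 a ha hh)
    · exact ⟨i, h1, Or.inl h2⟩
    · exact ⟨i, h1, Or.inr h2⟩
    · exact absurd (h1 ▸ (hmem i).2.2) (fun hh => hN12 a ha hh)
  -- every P3 through v as an endpoint is a seagull configuration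
  have hP3v : ∀ b c : V, G.Adj v b → G.Adj b c → ¬ G.Adj v c → c ≠ v →
      ∃ i, b = y i ∧ (c = x i ∨ c = z i) := by
    intro b c h1 h2 h3 h4
    exact hN1N2 b c h1 ⟨h4, h3, b, h1, h2⟩ h2
  obtain ⟨S, hSsol⟩ := exists_solution G
  by_cases hvS : v ∈ S
  · -- construct a new solution not containing v
    set Cov : Fin s → Prop := fun i => y i ∈ S ∨ (x i ∈ S ∧ z i ∈ S) with hCov
    -- at most one uncovered seagull
    have honeUnc : ∀ i j, ¬ Cov i → ¬ Cov j → i = j := by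
      intro i j hi hj
      by_contra hij
      have hyi : y i ∉ S := fun h => hi (Or.inl h)
      have hyj : y j ∉ S := fun h => hj (Or.inl h)
      -- pick the uncovered wing of seagull i
      have hw : ∃ w : V, w ∈ ({x i, z i} : Set V) ∧ w ∉ S ∧ G.Adj w (y i) ∧ w ∈ N2 G v := by
        by_cases hx : x i ∈ S
        · exact ⟨z i, by simp, fun hz => hi (Or.inr ⟨hx, hz⟩), (hadjyz i).symm, (hmem i).2.2⟩
        · exact ⟨x i, by simp, hx, hadjxy i, (hmem i).1⟩
      obtain ⟨w, hwmem, hwS, hwadj, hwN2⟩ := hw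
      -- (w, y i, y j) is a P3 in G \ S
      have hadjyiyj : G.Adj (y i) (y j) := hclique _ _ (hmem i).2.1 (hmem j).2.1 (hyy i j hij)
      have hnadj : ¬ G.Adj w (y j) := by
        intro hadj
        obtain ⟨k, hk1, hk2⟩ := hN1N2 (y j) w (hmem j).2.1 hwN2 hadj.symm
        have hjk : j = k := by
          by_contra hjk
          exact htr j k hjk (y j) (by simp) (by simp [hk1])
        subst hjk
        have : w ∈ ({x j, y j, z j} : Set V) := by
          rcases hk2 with h | h <;> simp [h]
        have hwtri : w ∈ ({x i, y i, z i} : Set V) := by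
          simp only [Set.mem_insert_iff, Set.mem_singleton_iff] at hwmem ⊢
          tauto
        exact htr i j hij w hwtri this
      have hwyj : w ≠ y j := by
        intro h
        exact hN12 (y j) (hmem j).2.1 (h ▸ hwN2)
      exact hSsol.1 w (y i) (y j)
        ⟨⟨hwadj, hwS, hyi⟩, ⟨hadjyiyj, hyi, hyj⟩,
          fun hc => hnadj hc.1, hwyj⟩
    -- choose the distinguished index
    set istar : Fin s := if h : ∃ i, ¬ Cov i then h.choose else ⟨0, hs⟩ with histar
    have hstar : ∀ i, ¬ Cov i → i = istar := by
      intro i hi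
      have h : ∃ i, ¬ Cov i := ⟨i, hi⟩
      rw [histar, dif_pos h]
      exact honeUnc i h.choose hi h.choose_spec
    set S' : Set V := insert (y istar) (S \ {v}) with hS'
    have hvy : v ≠ y istar := (hadjvy istar).ne
    have hvS' : v ∉ S' := by
      intro h
      rcases h with h | h
      · exact hvy h
      · exact h.2 rfl
    have hsub : S \ {v} ⊆ S' := Set.subset_insert _ _
    have hmemS' : ∀ w : V, w ∈ S → w ≠ v → w ∈ S' := by
      intro w hw hwv
      exact hsub ⟨hw, hwv⟩
    -- S' is a modulator
    have hmod' : IsModulator G S' := by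
      intro a b c hP3
      obtain ⟨⟨hab, haS', hbS'⟩, ⟨hbc, _, hcS'⟩, hnac, hac⟩ := hP3
      have hnadj : ¬ G.Adj a c := fun h => hnac ⟨h, haS', hcS'⟩
      by_cases ha : a = v
      · rw [ha] at hab hnadj
        obtain ⟨i, hb, hc⟩ := hP3v b c hab hbc hnadj (fun h => hac (by rw [ha, h]))
        have hyiS : y i ∉ S := by
          intro h
          exact hbS' (by rw [hb]; exact hmemS' _ h (hadjvy i).ne')
        have hii : i ≠ istar := by
          intro h
          exact hbS' (by rw [hb, h]; exact Set.mem_insert _ _)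
        have hcov : Cov i := by
          by_contra hnc
          exact hii (hstar i hnc)
        rcases hcov with h | ⟨h1, h2⟩
        · exact hyiS h
        · have hcS : c ∈ S := by rcases hc with h | h <;> (subst h; first | exact h1 | exact h2)
          exact hcS' (hmemS' c hcS (fun h => hac (by rw [ha, h])))
      · by_cases hc : c = v
        · rw [hc] at hbc hnadj
          obtain ⟨i, hb, ha2⟩ := hP3v b a hbc.symm hab.symm
            (fun h => hnadj h.symm) ha
          have hyiS : y i ∉ S := by
            intro h
            exact hbS' (by rw [hb]; exact hmemS' _ h (hadjvy i).ne')
          have hii : i ≠ istar := by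
            intro h
            exact hbS' (by rw [hb, h]; exact Set.mem_insert _ _)
          have hcov : Cov i := by
            by_contra hnc
            exact hii (hstar i hnc)
          rcases hcov with h | ⟨h1, h2⟩
          · exact hyiS h
          · have haS : a ∈ S := by rcases ha2 with h | h <;> (subst h; first | exact h1 | exact h2)
            exact haS' (hmemS' a haS ha)
        · by_cases hb : b = v
          · rw [hb] at hab hbc
            exact hnadj (hclique a c hab.symm hbc hac)
          · -- none is v : contradiction with S being a modulator
            have haS : a ∉ S := fun h => haS' (hmemS' a h ha)
            have hbS : b ∉ S := fun h => hbS' (hmemS' b h hb)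
            have hcS : c ∉ S := fun h => hcS' (hmemS' c h hc)
            exact hSsol.1 a b c
              ⟨⟨hab, haS, hbS⟩, ⟨hbc, hbS, hcS⟩, fun h => hnadj h.1, hac⟩
    -- cardinality
    have hfin : S.Finite := Set.toFinite S
    have hcard : S'.ncard ≤ S.ncard := by
      have h1 : S'.ncard ≤ (S \ {v}).ncard + 1 :=
        Set.ncard_insert_le _ _
      have h2 : (S \ {v}).ncard = S.ncard - 1 := by
        rw [Set.ncard_diff_singleton_of_mem hvS]
      have h3 : 0 < S.ncard := (Set.ncard_pos hfin).mpr ⟨v, hvS⟩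
      omega
    exact ⟨S', ⟨hmod', fun T hT => le_trans hcard (hSsol.2 T hT)⟩, hvS'⟩
  · exact ⟨S, hSsol, hvS⟩
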